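/- Let p, q, r be positive integers, n = p + q + r, and let a, b, c ∈ ℝ² be vectors satisfying p·a + q·b + r·c = 0 with ‖a‖ = 1/(4n) + 1/(4p), ‖b‖ = 1/(4n) + 1/(4q), ‖c‖ = 1/(4n) + 1/(4r). Then ‖a‖ + ‖b‖ − ‖a + b‖ = ‖a‖ + ‖c‖ − ‖a + c‖ = ‖b‖ + ‖c‖ − ‖b + c‖ = 1/n. -/

import Mathlib

lemma defect_aux (p q r : ℝ) (hp : 0 < p) (hq : 0 < q) (hr : 0 < r)
    (a b c : EuclideanSpace ℝ (Fin 2))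
    (hsum : p • a + q • b + r • c = 0)
    (ha : ‖a‖ = 1 / (4 * (p + q + r)) + 1 / (4 * p))
    (hb : ‖b‖ = 1 / (4 * (p + q + r)) + 1 / (4 * q))
    (hc : ‖c‖ = 1 / (4 * (p + q + r)) + 1 / (4 * r)) :
    ‖a‖ + ‖b‖ - ‖a + b‖ = 1 / (p + q + r) := by
  have hn : (0:ℝ) < p + q + r := by linarith
  have h1 : r • c = -(p • a + q • b) := eq_neg_of_add_eq_zero_right hsum
  have h2 : ‖r • c‖ ^ 2 = ‖p • a + q • b‖ ^ 2 := by rw [h1, norm_neg]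
  rw [norm_add_sq_real, norm_smul, norm_smul, norm_smul, real_inner_smul_left,
    real_inner_smul_right, Real.norm_eq_abs, Real.norm_eq_abs, Real.norm_eq_abs,
    abs_of_pos hp, abs_of_pos hq, abs_of_pos hr] at h2
  have hinner : (inner ℝ a b : ℝ) =
      (r ^ 2 * ‖c‖ ^ 2 - p ^ 2 * ‖a‖ ^ 2 - q ^ 2 * ‖b‖ ^ 2) / (2 * p * q) := by
    rw [eq_div_iff (by positivity)]
    linear_combination -h2
  have ht : 0 ≤ ‖a‖ + ‖b‖ - 1 / (p + q + r) := by
    rw [ha, hb]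
    have h1 : 1 / (4 * (p+q+r)) ≤ 1 / (4 * p) := by gcongr; linarith
    have h2 : 1 / (4 * (p+q+r)) ≤ 1 / (4 * q) := by gcongr; linarith
    have h4 : 1 / (p+q+r) = 4 * (1 / (4 * (p+q+r))) := by field_simp
    linarith
  have hsq : ‖a + b‖ ^ 2 = (‖a‖ + ‖b‖ - 1 / (p + q + r)) ^ 2 := by
    rw [norm_add_sq_real, hinner, ha, hb, hc]
    field_simp
    ring
  have hfin : ‖a + b‖ = ‖a‖ + ‖b‖ - 1 / (p + q + r) := by
    nlinarith [norm_nonneg (a + b), ht, hsq]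
  linarith

/-- Let `p, q, r` be positive integers, `n = p + q + r`, and `a, b, c ∈ ℝ²` with
`p•a + q•b + r•c = 0`, `‖a‖ = 1/(4n) + 1/(4p)`, `‖b‖ = 1/(4n) + 1/(4q)`,
`‖c‖ = 1/(4n) + 1/(4r)`. Then `‖a‖ + ‖b‖ − ‖a + b‖ = ‖a‖ + ‖c‖ − ‖a + c‖
= ‖b‖ + ‖c‖ − ‖b + c‖ = 1/n`. -/
theorem extremal_triangle_defects (p q r n : ℕ) (hp : 0 < p) (hq : 0 < q) (hr : 0 < r)
    (hn : n = p + q + r) (a b c : EuclideanSpace ℝ (Fin 2))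
    (hsum : (p : ℝ) • a + (q : ℝ) • b + (r : ℝ) • c = 0)
    (ha : ‖a‖ = 1 / (4 * n) + 1 / (4 * p))
    (hb : ‖b‖ = 1 / (4 * n) + 1 / (4 * q))
    (hc : ‖c‖ = 1 / (4 * n) + 1 / (4 * r)) :
    ‖a‖ + ‖b‖ - ‖a + b‖ = 1 / n ∧
    ‖a‖ + ‖c‖ - ‖a + c‖ = 1 / n ∧
    ‖b‖ + ‖c‖ - ‖b + c‖ = 1 / n := by
  have hp' : (0:ℝ) < p := by exact_mod_cast hp
  have hq' : (0:ℝ) < q := by exact_mod_cast hq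
  have hr' : (0:ℝ) < r := by exact_mod_cast hr
  have hn' : (n:ℝ) = (p:ℝ) + q + r := by rw [hn]; push_cast; ring
  have ha' : ‖a‖ = 1 / (4 * ((p:ℝ) + q + r)) + 1 / (4 * p) := by rw [ha, hn']
  have hb' : ‖b‖ = 1 / (4 * ((p:ℝ) + q + r)) + 1 / (4 * q) := by rw [hb, hn']
  have hc' : ‖c‖ = 1 / (4 * ((p:ℝ) + q + r)) + 1 / (4 * r) := by rw [hc, hn']
  have e1 : (p:ℝ) + r + q = (p:ℝ) + q + r := by ring
  have e2 : (q:ℝ) + r + p = (p:ℝ) + q + r := by ring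
  refine ⟨?_, ?_, ?_⟩
  · have := defect_aux p q r hp' hq' hr' a b c hsum ha' hb' hc'
    rw [hn']; exact this
  · have hsum2 : (p:ℝ) • a + (r:ℝ) • c + (q:ℝ) • b = 0 := by
      rw [add_right_comm] at hsum; exact hsum
    have := defect_aux p r q hp' hr' hq' a c b hsum2
      (by rw [ha', e1]) (by rw [hc', e1]) (by rw [hb', e1])
    rw [e1] at this
    rw [hn']; exact this
  · have hsum3 : (q:ℝ) • b + (r:ℝ) • c + (p:ℝ) • a = 0 := by
      have : (q:ℝ) • b + ((r:ℝ) • c + (p:ℝ) • a) = (p:ℝ) • a + (q:ℝ) • b + (r:ℝ) • c := by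
        abel
      rw [← add_assoc] at this; rw [this]; exact hsum
    have := defect_aux q r p hq' hr' hp' b c a hsum3
      (by rw [hb', e2]) (by rw [hc', e2]) (by rw [ha', e2])
    rw [e2] at this
    rw [hn']; exact this
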